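/- Let μ > 0, λ ∈ ℝ with 2μ + λ ≠ 0 and μ + λ arbitrary. Define D = −μΔ − (μ+λ)grad∘div acting on ℂ³-valued functions on ℝ³ (as Fourier multipliers). Then the operator D⁻¹ψ = −Δ⁻¹( (1/μ)ψ + (1/(2μ+λ) − 1/μ)Δ⁻¹ grad(div ψ) ) satisfies D⁻¹D = DD⁻¹ = Id on the appropriate weighted L² Fourier spaces. -/

import Mathlib

/-- as Fourier multiplier operators, D = −μΔ − (μ+λ)grad∘div has the
inverse D⁻¹ψ = −Δ⁻¹((1/μ)ψ + (1/(2μ+λ) − 1/μ)Δ⁻¹ grad(div ψ)): pointwise in Fourier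
space (for k ≠ 0) the corresponding multiplier matrices compose to the identity,
so D⁻¹D = DD⁻¹ = Id on the weighted L² Fourier spaces. -/
theorem stmt_6 (μ l : ℝ) (hμ : 0 < μ) (h2 : 2 * μ + l ≠ 0) :
    ∀ k : EuclideanSpace ℝ (Fin 3), k ≠ 0 →
    let K : Matrix (Fin 3) (Fin 3) ℝ := Matrix.of fun i j => k i * k j
    -- Fourier symbol of D = −μΔ − (μ+λ) grad div
    let M : Matrix (Fin 3) (Fin 3) ℝ :=
      (μ * ‖k‖ ^ 2) • (1 : Matrix (Fin 3) (Fin 3) ℝ) + (μ + l) • K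
    -- Fourier symbol of D⁻¹ = −Δ⁻¹((1/μ)·Id + (1/(2μ+λ) − 1/μ)·Δ⁻¹ grad div)
    let N : Matrix (Fin 3) (Fin 3) ℝ :=
      (‖k‖ ^ 2)⁻¹ • ((1 / μ) • (1 : Matrix (Fin 3) (Fin 3) ℝ)
        + (1 / (2 * μ + l) - 1 / μ) • (‖k‖ ^ 2)⁻¹ • K)
    N * M = 1 ∧ M * N = 1 := by
  intro k hk K M N
  have hkn : ‖k‖ ≠ 0 := norm_ne_zero_iff.mpr hk
  have hn2 : ‖k‖ ^ 2 ≠ 0 := pow_ne_zero _ hkn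
  have hnorm : ‖k‖ ^ 2 = ∑ i, k i ^ 2 := by
    rw [EuclideanSpace.norm_eq, Real.sq_sqrt (by positivity)]
    simp [Real.norm_eq_abs, sq_abs]
  have hK : K * K = (‖k‖ ^ 2) • K := by
    ext i j
    simp only [Matrix.mul_apply, Matrix.smul_apply, K, Matrix.of_apply, smul_eq_mul, hnorm,
      Finset.sum_mul]
    exact Finset.sum_congr rfl fun x _ => by ring
  have hμ' : μ ≠ 0 := ne_of_gt hμ
  constructor
  · show N * M = 1
    simp only [N, M, Matrix.add_mul, Matrix.mul_add, Matrix.smul_mul, Matrix.mul_smul,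
      Matrix.one_mul, Matrix.mul_one, hK, smul_smul, smul_add]
    match_scalars <;> field_simp <;> ring_nf <;> field_simp [show μ * 2 + l ≠ 0 by rwa [mul_comm]] <;> ring
  · show M * N = 1
    simp only [N, M, Matrix.add_mul, Matrix.mul_add, Matrix.smul_mul, Matrix.mul_smul,
      Matrix.one_mul, Matrix.mul_one, hK, smul_smul, smul_add]
    match_scalars <;> field_simp <;> ring_nf <;> field_simp [show μ * 2 + l ≠ 0 by rwa [mul_comm]] <;> ring
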